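/- Let D be a probability density on ℝ² of the form D(x₁,x₂) = N(x₁; θ₁, 1) · N(x₂; θ₂, E(x₁)), where E(x₁) = exp(exp(c·x₁³)) with c ≠ 0. Then the entropy integrand is not integrable: E_{(x₁,x₂) ~ D}[|log D(x₁,x₂)|] = ∞. -/
import Mathlib

open MeasureTheory Real
open scoped ENNReal

noncomputable def normalDensity (μ σ v : ℝ) : ℝ :=
  (Real.sqrt (2 * Real.pi) * σ)⁻¹ * Real.exp (-((v - μ) ^ 2) / (2 * σ ^ 2))

private lemma sqrt2pi_pos : 0 < Real.sqrt (2 * Real.pi) :=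
  Real.sqrt_pos.mpr (by positivity)

private lemma one_le_sqrt2pi : 1 ≤ Real.sqrt (2 * Real.pi) := by
  rw [show (1:ℝ) = Real.sqrt 1 from Real.sqrt_one.symm]
  exact Real.sqrt_le_sqrt (by nlinarith [Real.pi_gt_three])

private lemma two_pi_lt_exp : 2 * Real.pi < Real.exp (5/2) := by
  have h1 : (2.7182818283 : ℝ) < Real.exp 1 := Real.exp_one_gt_d9
  have h2 : Real.exp 1 * Real.exp 1 ≤ Real.exp (5/2) := by
    rw [← Real.exp_add]; exact Real.exp_le_exp.mpr (by norm_num)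
  nlinarith [Real.pi_lt_d2]

private lemma cubic_dom (a θ : ℝ) (ha : 0 < a) :
    ∃ M : ℝ, ∀ x ≥ M, 3 ≤ a * x ^ 3 - (x - θ) ^ 2 / 2 := by
  refine ⟨max (3/a) (max (3*|θ|) 3), fun x hx => ?_⟩
  have h1 : 3/a ≤ x := le_trans (le_max_left _ _) hx
  have h2 : 3*|θ| ≤ x := le_trans (le_trans (le_max_left _ _) (le_max_right _ _)) hx
  have h3 : (3:ℝ) ≤ x := le_trans (le_trans (le_max_right _ _) (le_max_right _ _)) hx
  have hax : 3 ≤ a * x := by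
    rw [div_le_iff₀ ha] at h1; linarith [mul_comm x a]
  have habs : |θ| ≤ x/3 := by linarith
  have hθ1 : θ ≤ x/3 := le_trans (le_abs_self θ) habs
  have hθ2 : -(x/3) ≤ θ := by linarith [neg_abs_le θ]
  nlinarith [sq_nonneg x, sq_nonneg (x - θ), mul_le_mul_of_nonneg_right hax (sq_nonneg x)]

/-- Key inner-integral lower bound. -/
private lemma inner_bound (θ₁ θ₂ c : ℝ) (x₁ : ℝ)
    (hray : 3 ≤ c * x₁ ^ 3 - (x₁ - θ₁) ^ 2 / 2) :
    1 ≤ ∫⁻ x₂ : ℝ, ENNReal.ofReal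
      ((normalDensity θ₁ 1 x₁ * normalDensity θ₂ (Real.exp (Real.exp (c * x₁ ^ 3))) x₂) *
        |Real.log (normalDensity θ₁ 1 x₁ * normalDensity θ₂ (Real.exp (Real.exp (c * x₁ ^ 3))) x₂)|) := by
  set σ := Real.exp (Real.exp (c * x₁ ^ 3)) with hσ
  have hσpos : 0 < σ := Real.exp_pos _
  have hσ1 : 1 ≤ σ := Real.one_le_exp (Real.exp_pos _).le
  set f₁ := normalDensity θ₁ 1 x₁ with hf₁
  have hf₁pos : 0 < f₁ := by
    rw [hf₁]; unfold normalDensity; positivity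
  have hf₁le : f₁ ≤ 1 := by
    rw [hf₁]; unfold normalDensity
    calc (Real.sqrt (2 * Real.pi) * 1)⁻¹ * Real.exp (-((x₁ - θ₁) ^ 2) / (2 * 1 ^ 2))
        ≤ (Real.sqrt (2 * Real.pi) * 1)⁻¹ * 1 := by
          apply mul_le_mul_of_nonneg_left _ (by positivity)
          refine Real.exp_le_one_iff.mpr ?_
          apply div_nonpos_of_nonpos_of_nonneg (by nlinarith [sq_nonneg (x₁ - θ₁)]) (by norm_num)
      _ ≤ 1 := by
          rw [mul_one, mul_one]
          exact inv_le_one_of_one_le₀ one_le_sqrt2pi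
  set L := f₁ * ((Real.sqrt (2 * Real.pi) * σ)⁻¹ * Real.exp (-(1/2) : ℝ)) *
      Real.exp (c * x₁ ^ 3) with hL
  have hLnn : 0 ≤ L := by positivity
  have hLσ : 1 ≤ L * σ := by
    have hEq : L * σ = (Real.sqrt (2 * Real.pi))⁻¹ * (Real.sqrt (2 * Real.pi))⁻¹ *
        (Real.exp (-((x₁ - θ₁) ^ 2) / (2 * 1 ^ 2)) * Real.exp (-(1/2) : ℝ) *
          Real.exp (c * x₁ ^ 3)) * (σ⁻¹ * σ) := by
      rw [hL, hf₁]; unfold normalDensity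
      rw [mul_inv]; ring
    rw [hEq, inv_mul_cancel₀ hσpos.ne', mul_one]
    have hinv : (Real.sqrt (2 * Real.pi))⁻¹ * (Real.sqrt (2 * Real.pi))⁻¹ = (2 * Real.pi)⁻¹ := by
      rw [← mul_inv, Real.mul_self_sqrt (by positivity)]
    rw [hinv, ← Real.exp_add, ← Real.exp_add]
    have hExp : 2 * Real.pi ≤ Real.exp (-((x₁ - θ₁) ^ 2) / (2 * 1 ^ 2) + (-(1/2)) + c * x₁ ^ 3) := by
      refine le_trans two_pi_lt_exp.le (Real.exp_le_exp.mpr ?_)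
      have h : -((x₁ - θ₁) ^ 2) / (2 * 1 ^ 2) = -((x₁ - θ₁) ^ 2 / 2) := by ring
      rw [h]; linarith
    calc (1:ℝ) = (2 * Real.pi)⁻¹ * (2 * Real.pi) := (inv_mul_cancel₀ (by positivity)).symm
      _ ≤ _ := mul_le_mul_of_nonneg_left hExp (by positivity)
  calc (1:ℝ≥0∞) ≤ ENNReal.ofReal (L * σ) := ENNReal.one_le_ofReal.mpr hLσ
    _ = ENNReal.ofReal L * ENNReal.ofReal σ := ENNReal.ofReal_mul hLnn
    _ = ENNReal.ofReal L * volume (Set.Icc θ₂ (θ₂ + σ)) := by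
        rw [Real.volume_Icc]; norm_num
    _ = ∫⁻ _ in Set.Icc θ₂ (θ₂ + σ), ENNReal.ofReal L := (setLIntegral_const _ _).symm
    _ ≤ ∫⁻ x₂ in Set.Icc θ₂ (θ₂ + σ), ENNReal.ofReal
          ((f₁ * normalDensity θ₂ σ x₂) * |Real.log (f₁ * normalDensity θ₂ σ x₂)|) := by
        refine setLIntegral_mono' measurableSet_Icc fun x₂ hx₂ => ENNReal.ofReal_le_ofReal ?_
        obtain ⟨hx₂l, hx₂r⟩ := hx₂
        set g₂ := normalDensity θ₂ σ x₂ with hg₂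
        have hg₂pos : 0 < g₂ := by rw [hg₂]; unfold normalDensity; positivity
        have hg₂lb : (Real.sqrt (2 * Real.pi) * σ)⁻¹ * Real.exp (-(1/2) : ℝ) ≤ g₂ := by
          rw [hg₂]; unfold normalDensity
          apply mul_le_mul_of_nonneg_left _ (by positivity)
          apply Real.exp_le_exp.mpr
          rw [le_div_iff₀ (by positivity : (0:ℝ) < 2 * σ ^ 2)]
          nlinarith [sq_nonneg (x₂ - θ₂)]
        have hg₂ub : g₂ ≤ σ⁻¹ := by
          rw [hg₂]; unfold normalDensity
          calc (Real.sqrt (2 * Real.pi) * σ)⁻¹ * Real.exp (-((x₂ - θ₂) ^ 2) / (2 * σ ^ 2))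
              ≤ (Real.sqrt (2 * Real.pi) * σ)⁻¹ * 1 := by
                apply mul_le_mul_of_nonneg_left _ (by positivity)
                refine Real.exp_le_one_iff.mpr ?_
                apply div_nonpos_of_nonpos_of_nonneg (by nlinarith [sq_nonneg (x₂ - θ₂)])
                  (by positivity)
            _ ≤ σ⁻¹ := by
                rw [mul_one, mul_inv]
                calc (Real.sqrt (2 * Real.pi))⁻¹ * σ⁻¹ ≤ 1 * σ⁻¹ := by
                      apply mul_le_mul_of_nonneg_right
                        (inv_le_one_of_one_le₀ one_le_sqrt2pi) (by positivity)
                  _ = σ⁻¹ := one_mul _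
        have hGub : f₁ * g₂ ≤ σ⁻¹ :=
          calc f₁ * g₂ ≤ 1 * σ⁻¹ := mul_le_mul hf₁le hg₂ub hg₂pos.le zero_le_one
            _ = σ⁻¹ := one_mul _
        have hlog : Real.exp (c * x₁ ^ 3) ≤ |Real.log (f₁ * g₂)| := by
          have h1 : Real.log (f₁ * g₂) ≤ -Real.exp (c * x₁ ^ 3) := by
            calc Real.log (f₁ * g₂) ≤ Real.log σ⁻¹ :=
                Real.log_le_log (by positivity) hGub
              _ = -Real.log σ := Real.log_inv σ
              _ = -Real.exp (c * x₁ ^ 3) := by rw [hσ, Real.log_exp]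
          calc Real.exp (c * x₁ ^ 3) ≤ -Real.log (f₁ * g₂) := by linarith
            _ ≤ |Real.log (f₁ * g₂)| := neg_le_abs _
        calc L = f₁ * ((Real.sqrt (2 * Real.pi) * σ)⁻¹ * Real.exp (-(1/2) : ℝ)) *
              Real.exp (c * x₁ ^ 3) := hL
          _ ≤ f₁ * g₂ * Real.exp (c * x₁ ^ 3) := by
              apply mul_le_mul_of_nonneg_right _ (Real.exp_pos _).le
              exact mul_le_mul_of_nonneg_left hg₂lb hf₁pos.le
          _ ≤ f₁ * g₂ * |Real.log (f₁ * g₂)| :=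
              mul_le_mul_of_nonneg_left hlog (by positivity)
    _ ≤ ∫⁻ x₂ : ℝ, ENNReal.ofReal
          ((f₁ * normalDensity θ₂ σ x₂) * |Real.log (f₁ * normalDensity θ₂ σ x₂)|) :=
        setLIntegral_le_lintegral _ _

theorem stmt_7 (θ₁ θ₂ c : ℝ) (hc : c ≠ 0)
    (D : ℝ × ℝ → ℝ)
    (hD : ∀ x : ℝ × ℝ,
      D x = normalDensity θ₁ 1 x.1 *
        normalDensity θ₂ (Real.exp (Real.exp (c * x.1 ^ 3))) x.2) :
    ∫⁻ x : ℝ × ℝ, ENNReal.ofReal (D x * |Real.log (D x)|) = ⊤ := by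
  have hG : Measurable (fun x : ℝ × ℝ =>
      normalDensity θ₁ 1 x.1 * normalDensity θ₂ (Real.exp (Real.exp (c * x.1 ^ 3))) x.2) := by
    unfold normalDensity
    fun_prop
  have hmeas : Measurable (fun x : ℝ × ℝ => ENNReal.ofReal
      ((normalDensity θ₁ 1 x.1 * normalDensity θ₂ (Real.exp (Real.exp (c * x.1 ^ 3))) x.2) *
        |Real.log (normalDensity θ₁ 1 x.1 *
          normalDensity θ₂ (Real.exp (Real.exp (c * x.1 ^ 3))) x.2)|)) :=
    (hG.mul hG.log.abs).ennreal_ofReal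
  simp only [hD]
  rw [Measure.volume_eq_prod, lintegral_prod _ hmeas.aemeasurable]
  refine top_unique ?_
  obtain ⟨S, hSm, hSvol, hSray⟩ :
      ∃ S : Set ℝ, MeasurableSet S ∧ volume S = ⊤ ∧
        ∀ x ∈ S, 3 ≤ c * x ^ 3 - (x - θ₁) ^ 2 / 2 := by
    rcases hc.lt_or_gt with hneg | hpos
    · obtain ⟨M, hM⟩ := cubic_dom (-c) (-θ₁) (by linarith)
      refine ⟨Set.Iic (-M), measurableSet_Iic, Real.volume_Iic, fun x hx => ?_⟩
      have h := hM (-x) (by simp only [Set.mem_Iic] at hx; linarith)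
      nlinarith [h]
    · obtain ⟨M, hM⟩ := cubic_dom c θ₁ hpos
      exact ⟨Set.Ici M, measurableSet_Ici, Real.volume_Ici, fun x hx => hM x hx⟩
  calc (⊤:ℝ≥0∞) = 1 * volume S := by rw [hSvol, one_mul]
    _ = ∫⁻ _ in S, 1 := (setLIntegral_const _ _).symm
    _ ≤ ∫⁻ x₁ in S, ∫⁻ x₂ : ℝ, ENNReal.ofReal
          ((normalDensity θ₁ 1 x₁ * normalDensity θ₂ (Real.exp (Real.exp (c * x₁ ^ 3))) x₂) *
            |Real.log (normalDensity θ₁ 1 x₁ *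
              normalDensity θ₂ (Real.exp (Real.exp (c * x₁ ^ 3))) x₂)|) :=
        setLIntegral_mono' hSm fun x₁ hx₁ => inner_bound θ₁ θ₂ c x₁ (hSray x₁ hx₁)
    _ ≤ _ := setLIntegral_le_lintegral _ _
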